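/- If f − φ is convex on C (f is 1-strongly convex relative to φ) and x⁺ = argmin_{u∈C} ⟨∇f(x), u−x⟩ + D_φ(u,x), then D_φ(x, x⁺) ≥ f(x) − min_{u∈C} f(u), i.e., the Bregman PL-inequality holds with η = 1. -/

import Mathlib

open scoped RealInnerProductSpace

noncomputable def breg {n : ℕ} (h : EuclideanSpace ℝ (Fin n) → ℝ)
    (h' : EuclideanSpace ℝ (Fin n) → EuclideanSpace ℝ (Fin n))
    (x y : EuclideanSpace ℝ (Fin n)) : ℝ :=
  h x - h y - ⟪h' y, x - y⟫

/-- Gradient inequality for a convex function on a set, at a point of the set. -/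
lemma convexOn_grad_ineq {n : ℕ} {C : Set (EuclideanSpace ℝ (Fin n))}
    {h : EuclideanSpace ℝ (Fin n) → ℝ} (hh : ConvexOn ℝ C h)
    {g w : EuclideanSpace ℝ (Fin n)} (hw : w ∈ C) (hg : HasGradientAt h g w)
    {y : EuclideanSpace ℝ (Fin n)} (hy : y ∈ C) :
    h w + ⟪g, y - w⟫ ≤ h y := by
  set v := y - w with hv
  have hL : HasDerivAt (fun t : ℝ => w + t • v) v 0 := by
    simpa using ((hasDerivAt_id (0 : ℝ)).smul_const v).const_add w
  have hψ : HasDerivAt (fun t : ℝ => h (w + t • v)) ⟪g, v⟫ 0 := by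
    have h1 : HasFDerivAt h (InnerProductSpace.toDual ℝ _ g) w := hg.hasFDerivAt
    have h2 : HasFDerivAt h (InnerProductSpace.toDual ℝ _ g) ((fun t : ℝ => w + t • v) 0) := by
      simpa using h1
    have h3 := h2.comp_hasDerivAt 0 hL
    simp only [InnerProductSpace.toDual_apply_apply] at h3
    exact h3
  have hslope : Filter.Tendsto (slope (fun t : ℝ => h (w + t • v)) 0)
      (nhdsWithin 0 (Set.Ioi 0)) (nhds ⟪g, v⟫) :=
    ((hasDerivAt_iff_tendsto_slope).1 hψ).mono_left
      (nhdsWithin_mono 0 (fun t ht => ne_of_gt ht))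
  have hbound : ∀ᶠ t in nhdsWithin (0 : ℝ) (Set.Ioi 0),
      slope (fun t : ℝ => h (w + t • v)) 0 t ≤ h y - h w := by
    filter_upwards [Ioc_mem_nhdsGT_of_mem (by constructor <;> norm_num :
      (0 : ℝ) ∈ Set.Ico (0 : ℝ) 1)] with t ht
    have ht0 : 0 < t := ht.1
    have ht1 : t ≤ 1 := ht.2
    have hpt : w + t • v = (1 - t) • w + t • y := by
      rw [hv]; rw [smul_sub, sub_smul, one_smul]; abel
    have hconv : h (w + t • v) ≤ (1 - t) * h w + t * h y := by
      rw [hpt]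
      exact hh.2 hw hy (by linarith) (le_of_lt ht0) (by ring)
    rw [slope_def_field]
    rw [div_le_iff₀ (by simpa using ht0)]
    simp only [zero_smul, add_zero, sub_zero]
    nlinarith
  have hlim : ⟪g, v⟫ ≤ h y - h w :=
    le_of_tendsto hslope hbound
  linarith

theorem bregman_pl_of_rel_strong_convexity {n : ℕ}
    (C : Set (EuclideanSpace ℝ (Fin n))) (hCcl : IsClosed C) (hC : Convex ℝ C)
    (f φ : EuclideanSpace ℝ (Fin n) → ℝ)
    (f' φ' : EuclideanSpace ℝ (Fin n) → EuclideanSpace ℝ (Fin n))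
    (hf : ∀ z ∈ interior C, HasGradientAt f (f' z) z)
    (hφ : ∀ z ∈ interior C, HasGradientAt φ (φ' z) z)
    (hfφ : ConvexOn ℝ C (fun z => f z - φ z))
    (z : EuclideanSpace ℝ (Fin n)) (hz : z ∈ C) (hzmin : IsMinOn f C z)
    (x : EuclideanSpace ℝ (Fin n)) (hx : x ∈ interior C)
    (xp : EuclideanSpace ℝ (Fin n)) (hxp : xp ∈ interior C)
    (hxpmin : IsMinOn (fun u => ⟪f' x, u - x⟫ + breg φ φ' u x) C xp)
    (hxpuniq : ∀ w ∈ C,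
      IsMinOn (fun u => ⟪f' x, u - x⟫ + breg φ φ' u x) C w → w = xp) :
    breg φ φ' x xp ≥ f x - f z := by
  have hxC : x ∈ C := interior_subset hx
  have hxpC : xp ∈ C := interior_subset hxp
  -- f - φ has gradient f' x - φ' x at x
  have hsub : HasGradientAt (fun u => f u - φ u) (f' x - φ' x) x := by
    rw [hasGradientAt_iff_hasFDerivAt] at *
    have := (hf x hx).hasFDerivAt.sub (hφ x hx).hasFDerivAt
    rw [map_sub]; exact this
  -- gradient inequality for f - φ at x, evaluated at z
  have h1 : (f x - φ x) + ⟪f' x - φ' x, z - x⟫ ≤ f z - φ z :=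
    convexOn_grad_ineq hfφ hxC hsub hz
  -- the model function g has gradient f' x + (φ' xp - φ' x) at xp
  have hgmodel : HasGradientAt (fun u => ⟪f' x, u - x⟫ + breg φ φ' u x)
      (f' x + (φ' xp - φ' x)) xp := by
    rw [hasGradientAt_iff_hasFDerivAt]
    have hlin : ∀ c : EuclideanSpace ℝ (Fin n),
        HasFDerivAt (fun u : EuclideanSpace ℝ (Fin n) => ⟪c, u - x⟫)
          (InnerProductSpace.toDual ℝ _ c : _ →L[ℝ] ℝ) xp := by
      intro c
      have := ((InnerProductSpace.toDual ℝ (EuclideanSpace ℝ (Fin n)) c)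
          |>.hasFDerivAt (x := xp)).sub_const ⟪c, x⟫
      apply this.congr_of_eventuallyEq
      filter_upwards with u
      simp [InnerProductSpace.toDual_apply_apply, inner_sub_right]
    have hφxp : HasFDerivAt φ (InnerProductSpace.toDual ℝ _ (φ' xp)) xp :=
      (hφ xp hxp).hasFDerivAt
    have hcomb := ((hlin (f' x)).add ((hφxp.sub_const (φ x)).sub (hlin (φ' x))))
    have : HasFDerivAt (fun u => ⟪f' x, u - x⟫ + ((φ u - φ x) - ⟪φ' x, u - x⟫))
        (InnerProductSpace.toDual ℝ _ (f' x) + (InnerProductSpace.toDual ℝ _ (φ' xp)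
          - InnerProductSpace.toDual ℝ _ (φ' x))) xp := hcomb
    have heq : (fun u => ⟪f' x, u - x⟫ + ((φ u - φ x) - ⟪φ' x, u - x⟫))
        = (fun u => ⟪f' x, u - x⟫ + breg φ φ' u x) := by
      funext u; simp only [breg]
    rw [heq] at this
    simpa [map_add, map_sub] using this
  -- first order condition: gradient vanishes at the interior minimizer
  have hloc : IsLocalMin (fun u => ⟪f' x, u - x⟫ + breg φ φ' u x) xp :=
    hxpmin.isLocalMin (mem_interior_iff_mem_nhds.1 hxp)
  have hz0 : f' x + (φ' xp - φ' x) = 0 := by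
    have := hloc.hasFDerivAt_eq_zero hgmodel.hasFDerivAt
    have h2 : InnerProductSpace.toDual ℝ (EuclideanSpace ℝ (Fin n))
        (f' x + (φ' xp - φ' x)) = InnerProductSpace.toDual ℝ _ (0 : EuclideanSpace ℝ (Fin n)) := by
      rw [map_zero]; exact this
    exact (InnerProductSpace.toDual ℝ _).injective h2
  have hφ'xp : φ' xp = φ' x - f' x := by
    have := hz0
    rw [add_sub_assoc'] at this
    linear_combination (norm := module) this
  -- minimality of xp
  have h2 : (fun u => ⟪f' x, u - x⟫ + breg φ φ' u x) xp
      ≤ (fun u => ⟪f' x, u - x⟫ + breg φ φ' u x) z := hxpmin hz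
  simp only [breg, hφ'xp] at h2 ⊢
  simp only [inner_sub_left, inner_sub_right] at h1 h2 ⊢
  linarith
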